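/- arXiv:2509.07703 — 3 statements merged into one kernel-verified Lean document; each statement's English description precedes it below -/
import Mathlib

section
/- Let S_i ∈ R^{d×d}, i = 1,…,n, be positive or negative definite matrices, |S| = blkdiag(|S_1|,…,|S_n|), and L̄ = L ⊗ I_d for the Laplacian L of a connected undirected graph. Then the matrix |S|L̄ has exactly d zero eigenvalues, and every nonzero eigenvalue of |S|L̄ has strictly positive real part. -/
open Matrix
open scoped Kronecker

/-- `M` is positive definite in the (possibly non-symmetric) sense. -/
def PosDefMat {d : ℕ} (M : Matrix (Fin d) (Fin d) ℝ) : Prop :=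
  ∀ x : Fin d → ℝ, x ≠ 0 → 0 < x ⬝ᵥ M.mulVec x

/-- `M` is negative definite. -/
def NegDefMat {d : ℕ} (M : Matrix (Fin d) (Fin d) ℝ) : Prop :=
  ∀ x : Fin d → ℝ, x ≠ 0 → x ⬝ᵥ M.mulVec x < 0

/-- The block-diagonal matrix `blkdiag(M_1, …, M_n)` indexed by `Fin n × Fin d`. -/
def blkDiag {n d : ℕ} (M : Fin n → Matrix (Fin d) (Fin d) ℝ) :
    Matrix (Fin n × Fin d) (Fin n × Fin d) ℝ :=
  Matrix.of fun p q => if p.1 = q.1 then M p.1 p.2 q.2 else 0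

namespace AbsSHelp

open Polynomial
open scoped ComplexConjugate

set_option linter.unusedSectionVars false

section Real

variable {n d : ℕ}

lemma blkDiag_quad (M : Fin n → Matrix (Fin d) (Fin d) ℝ) (x : Fin n × Fin d → ℝ) :
    x ⬝ᵥ (blkDiag M) *ᵥ x = ∑ i, (fun k => x (i,k)) ⬝ᵥ (M i) *ᵥ (fun k => x (i,k)) := by
  simp only [dotProduct, mulVec, blkDiag, Matrix.of_apply]
  rw [Fintype.sum_prod_type]
  refine Finset.sum_congr rfl fun i _ => Finset.sum_congr rfl fun k _ => ?_
  congr 1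
  rw [Fintype.sum_prod_type]
  rw [Finset.sum_eq_single i]
  · simp
  · intro j _ hj; simp [hj.symm]
  · simp

lemma kron_mulVec (L : Matrix (Fin n) (Fin n) ℝ) (x : Fin n × Fin d → ℝ) (i : Fin n) (k : Fin d) :
    ((L ⊗ₖ (1 : Matrix (Fin d) (Fin d) ℝ)) *ᵥ x) (i,k) = (L *ᵥ fun j => x (j,k)) i := by
  simp only [mulVec, dotProduct, kroneckerMap_apply, one_apply]
  rw [Fintype.sum_prod_type]
  refine Finset.sum_congr rfl fun j _ => ?_
  rw [Finset.sum_eq_single k] <;> simp +contextual [eq_comm]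

lemma kron_quad (L : Matrix (Fin n) (Fin n) ℝ) (x : Fin n × Fin d → ℝ) :
    x ⬝ᵥ (L ⊗ₖ (1 : Matrix (Fin d) (Fin d) ℝ)) *ᵥ x
      = ∑ k, (fun j => x (j,k)) ⬝ᵥ (L *ᵥ fun j => x (j,k)) := by
  simp only [dotProduct]
  rw [Fintype.sum_prod_type, Finset.sum_comm]
  exact Finset.sum_congr rfl fun k _ => Finset.sum_congr rfl fun i _ => by rw [kron_mulVec]

lemma kron_transpose_symm (L : Matrix (Fin n) (Fin n) ℝ) (hL : Lᵀ = L) :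
    (L ⊗ₖ (1 : Matrix (Fin d) (Fin d) ℝ))ᵀ = L ⊗ₖ (1 : Matrix (Fin d) (Fin d) ℝ) := by
  ext ⟨i,k⟩ ⟨j,l⟩
  have h2 : L i j = L j i := by conv_lhs => rw [← hL, transpose_apply]
  simp only [transpose_apply, kroneckerMap_apply, one_apply, h2]
  simp [eq_comm]

lemma kron_posSemidef (G : SimpleGraph (Fin n)) [DecidableRel G.Adj] :
    ((G.lapMatrix ℝ) ⊗ₖ (1 : Matrix (Fin d) (Fin d) ℝ)).PosSemidef := by
  refine .of_dotProduct_mulVec_nonneg ?_ ?_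
  · show _ᴴ = _
    rw [conjTranspose_eq_transpose_of_trivial]
    exact kron_transpose_symm _ (G.isSymm_lapMatrix (R := ℝ))
  · intro x
    show (0:ℝ) ≤ star x ⬝ᵥ _
    rw [star_trivial, kron_quad]
    exact Finset.sum_nonneg fun k _ => by
      simpa using (G.posSemidef_lapMatrix ℝ).dotProduct_mulVec_nonneg (fun j => x (j,k))

lemma posDefMat_nonneg {M : Matrix (Fin d) (Fin d) ℝ} (h : PosDefMat M) (x : Fin d → ℝ) :
    0 ≤ x ⬝ᵥ M *ᵥ x := by
  by_cases hx : x = 0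
  · simp [hx]
  · exact (h x hx).le

section
variable (S : Fin n → Matrix (Fin d) (Fin d) ℝ) (s : Fin n → ℝ)
  (hS : ∀ i, (PosDefMat (S i) ∧ s i = 1) ∨ (NegDefMat (S i) ∧ s i = -1))

include hS

lemma blocks_posDef (i : Fin n) : PosDefMat (s i • S i) := by
  intro x hx
  rcases hS i with ⟨h, hs⟩ | ⟨h, hs⟩
  · simpa [hs] using h x hx
  · have := h x hx
    have h2 : x ⬝ᵥ (s i • S i) *ᵥ x = s i * (x ⬝ᵥ S i *ᵥ x) := by
      rw [smul_mulVec, dotProduct_smul, smul_eq_mul]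
    rw [h2, hs]
    linarith

lemma A_posDef : ∀ x : Fin n × Fin d → ℝ, x ≠ 0 →
    0 < x ⬝ᵥ (blkDiag (fun i => s i • S i)) *ᵥ x := by
  intro x hx
  rw [blkDiag_quad]
  have hne : ∃ p : Fin n × Fin d, x p ≠ 0 := by
    by_contra h
    push_neg at h
    exact hx (funext h)
  obtain ⟨⟨i, k⟩, hik⟩ := hne
  refine Finset.sum_pos' (fun j _ => posDefMat_nonneg (blocks_posDef S s hS j) _)
    ⟨i, Finset.mem_univ i, ?_⟩
  refine blocks_posDef S s hS i _ fun h0 => hik ?_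
  exact congrFun h0 k

lemma A_mulVec_injective (x : Fin n × Fin d → ℝ)
    (hx : (blkDiag (fun i => s i • S i)) *ᵥ x = 0) : x = 0 := by
  by_contra h
  have := A_posDef S s hS x h
  rw [hx] at this
  simp at this

end
end Real

section Kernel

variable {ι : Type*} [Fintype ι] [DecidableEq ι]

lemma dot_symm_shift (P : Matrix ι ι ℝ) (hP : Pᵀ = P) (x v : ι → ℝ) :
    x ⬝ᵥ (P *ᵥ v) = (P *ᵥ x) ⬝ᵥ v := by
  rw [Matrix.dotProduct_mulVec, ← Matrix.mulVec_transpose, hP]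

variable {Lb : Matrix ι ι ℝ}

open scoped MatrixOrder in
noncomputable def _root_.Matrix.PosSemidef.sqrt {A : Matrix ι ι ℝ} (_ : A.PosSemidef) :
    Matrix ι ι ℝ := CFC.sqrt A

open scoped MatrixOrder in
lemma _root_.Matrix.PosSemidef.posSemidef_sqrt {A : Matrix ι ι ℝ} (hA : A.PosSemidef) :
    hA.sqrt.PosSemidef := (CFC.sqrt_nonneg A).posSemidef

open scoped MatrixOrder in
lemma _root_.Matrix.PosSemidef.sqrt_mul_self {A : Matrix ι ι ℝ} (hA : A.PosSemidef) :
    hA.sqrt * hA.sqrt = A := CFC.sqrt_mul_sqrt_self A hA.nonneg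

lemma sqrt_symm (hLb : Lb.PosSemidef) : (hLb.sqrt)ᵀ = hLb.sqrt := by
  have := hLb.posSemidef_sqrt.1
  rwa [IsHermitian, conjTranspose_eq_transpose_of_trivial] at this

lemma quad_eq_sq (hLb : Lb.PosSemidef) (x : ι → ℝ) :
    x ⬝ᵥ Lb *ᵥ x = (hLb.sqrt *ᵥ x) ⬝ᵥ (hLb.sqrt *ᵥ x) := by
  conv_lhs => rw [← hLb.sqrt_mul_self]
  rw [← mulVec_mulVec, dot_symm_shift _ (sqrt_symm hLb)]

lemma quad_nonneg (hLb : Lb.PosSemidef) (x : ι → ℝ) : 0 ≤ x ⬝ᵥ Lb *ᵥ x := by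
  rw [quad_eq_sq hLb]
  exact Finset.sum_nonneg fun i _ => mul_self_nonneg _

lemma quad_zero (hLb : Lb.PosSemidef) (x : ι → ℝ) (h : x ⬝ᵥ Lb *ᵥ x = 0) : Lb *ᵥ x = 0 := by
  have h2 : hLb.sqrt *ᵥ x = 0 := by
    have := quad_eq_sq hLb x
    rw [h] at this
    exact (dotProduct_self_eq_zero).mp this.symm
  conv_lhs => rw [← hLb.sqrt_mul_self]
  rw [← mulVec_mulVec, h2, mulVec_zero]

lemma key_stab (hLb : Lb.PosSemidef) (A : Matrix ι ι ℝ)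
    (hApos : ∀ x, x ≠ 0 → 0 < x ⬝ᵥ A *ᵥ x)
    (hAinj : ∀ x, A *ᵥ x = 0 → x = 0)
    (z : ι → ℝ) (h : (A * Lb) *ᵥ ((A * Lb) *ᵥ z) = 0) : (A * Lb) *ᵥ z = 0 := by
  set P := hLb.sqrt with hPdef
  have hPsymm : Pᵀ = P := sqrt_symm hLb
  set y := Lb *ᵥ z with hy
  have h1 : Lb *ᵥ (A *ᵥ y) = 0 := by
    apply hAinj
    have heq : (A * Lb) *ᵥ ((A * Lb) *ᵥ z) = A *ᵥ (Lb *ᵥ (A *ᵥ (Lb *ᵥ z))) := by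
      simp [← mulVec_mulVec]
    rwa [heq] at h
  have h2 : P *ᵥ (A *ᵥ y) = 0 := by
    have hq : (A *ᵥ y) ⬝ᵥ Lb *ᵥ (A *ᵥ y) = 0 := by rw [h1, dotProduct_zero]
    rw [quad_eq_sq hLb] at hq
    exact dotProduct_self_eq_zero.mp hq
  set ζ := P *ᵥ z with hζ
  have hy2 : y = P *ᵥ ζ := by
    rw [hy, ← hLb.sqrt_mul_self, ← mulVec_mulVec]
  have h3 : P *ᵥ (A *ᵥ (P *ᵥ ζ)) = 0 := by rw [← hy2]; exact h2
  have h4 : (P *ᵥ ζ) ⬝ᵥ (A *ᵥ (P *ᵥ ζ)) = 0 := by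
    rw [← dot_symm_shift P hPsymm, h3, dotProduct_zero]
  have h5 : P *ᵥ ζ = 0 := by
    by_contra hne
    exact absurd h4 (ne_of_gt (hApos _ hne))
  have hy0 : y = 0 := by rw [hy2, h5]
  show (A * Lb) *ᵥ z = 0
  rw [← mulVec_mulVec, ← hy, hy0, mulVec_zero]

lemma charpoly_toLin' (B : Matrix ι ι ℝ) :
    (Matrix.toLin' B : Module.End ℝ (ι → ℝ)).charpoly = B.charpoly := by
  rw [← LinearMap.charpoly_toMatrix (Matrix.toLin' B) (Pi.basisFun ℝ ι),
    LinearMap.toMatrix_eq_toMatrix', LinearMap.toMatrix'_toLin']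

lemma natTrailing_eq_finrank_ker (B : Matrix ι ι ℝ)
    (hstab : ∀ z, B *ᵥ (B *ᵥ z) = 0 → B *ᵥ z = 0) :
    Polynomial.natTrailingDegree B.charpoly
      = Module.finrank ℝ (LinearMap.ker (Matrix.toLin' B)) := by
  set φ : Module.End ℝ (ι → ℝ) := Matrix.toLin' B with hφ
  have hstab' : ∀ z, φ (φ z) = 0 → φ z = 0 := by
    intro z
    simpa [hφ, Matrix.toLin'_apply] using hstab z
  have hpow : ∀ k : ℕ, LinearMap.ker (φ ^ (k+1)) ≤ LinearMap.ker φ := by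
    intro k
    induction k with
    | zero => rw [pow_one]
    | succ k ih =>
      intro x hx
      rw [LinearMap.mem_ker] at hx ⊢
      rw [pow_succ, Module.End.mul_apply] at hx
      have h1 : φ x ∈ LinearMap.ker φ := ih (LinearMap.mem_ker.mpr hx)
      rw [LinearMap.mem_ker] at h1
      exact hstab' x h1
  have hmax : φ.maxGenEigenspace 0 = LinearMap.ker φ := by
    apply le_antisymm
    · rw [← Module.End.iSup_genEigenspace_eq]
      apply iSup_le
      intro k
      rw [Module.End.genEigenspace_nat]
      simp only [zero_smul, sub_zero]
      cases k with
      | zero => simp [pow_zero, Module.End.one_eq_id]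
      | succ k => exact hpow k
    · intro x hx
      rw [Module.End.mem_maxGenEigenspace]
      refine ⟨1, by simpa using hx⟩
  rw [← charpoly_toLin' B, ← LinearMap.finrank_maxGenEigenspace_zero_eq, hmax]

end Kernel

section KerDim

variable {n d : ℕ}

noncomputable def kerEquiv (L : Matrix (Fin n) (Fin n) ℝ) :
    LinearMap.ker (Matrix.toLin' (L ⊗ₖ (1 : Matrix (Fin d) (Fin d) ℝ))) ≃ₗ[ℝ]
      (Fin d → LinearMap.ker (Matrix.toLin' L)) where
  toFun x := fun k => ⟨fun j => x.1 (j,k), by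
    have hx := x.2
    rw [LinearMap.mem_ker, Matrix.toLin'_apply] at hx ⊢
    funext i
    rw [← kron_mulVec L x.1 i k, hx]
    rfl⟩
  map_add' x y := rfl
  map_smul' c x := rfl
  invFun y := ⟨fun p => (y p.2).1 p.1, by
    rw [LinearMap.mem_ker, Matrix.toLin'_apply]
    funext p
    obtain ⟨i, k⟩ := p
    rw [kron_mulVec]
    have := (y k).2
    rw [LinearMap.mem_ker, Matrix.toLin'_apply] at this
    rw [show (fun j => (y k).1 j) = (y k).1 from rfl]
    rw [this]
    rfl⟩
  left_inv x := rfl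
  right_inv y := rfl

lemma finrank_ker_kron (G : SimpleGraph (Fin n)) [DecidableRel G.Adj] (hconn : G.Connected) :
    Module.finrank ℝ
      (LinearMap.ker (Matrix.toLin' ((G.lapMatrix ℝ) ⊗ₖ (1 : Matrix (Fin d) (Fin d) ℝ)))) = d := by
  rw [(kerEquiv (G.lapMatrix ℝ)).finrank_eq, Module.finrank_pi_fintype,
    Finset.sum_const, Finset.card_univ, Fintype.card_fin, smul_eq_mul]
  have h1 : Module.finrank ℝ (LinearMap.ker (Matrix.toLin' (G.lapMatrix ℝ))) = 1 := by
    rw [← G.card_connectedComponent_eq_finrank_ker_toLin'_lapMatrix]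
    have hsub : Subsingleton G.ConnectedComponent := by
      constructor
      intro a b
      obtain ⟨va, rfl⟩ := a.exists_rep
      obtain ⟨vb, rfl⟩ := b.exists_rep
      exact SimpleGraph.ConnectedComponent.eq.mpr (hconn.preconnected va vb)
    have hne : Nonempty G.ConnectedComponent := by
      have := hconn.nonempty
      exact ⟨SimpleGraph.connectedComponentMk G (Classical.arbitrary _)⟩
    exact Fintype.card_eq_one_iff.mpr ⟨Classical.arbitrary _, fun y => Subsingleton.elim _ _⟩
  rw [h1, mul_one]

end KerDim

section Cplx

variable {ι : Type*} [Fintype ι] [DecidableEq ι]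

lemma eval_charpoly_det (M : Matrix ι ι ℂ) (μ : ℂ) :
    (Matrix.charpoly M).eval μ = Matrix.det (Matrix.diagonal (fun _ => μ) - M) := by
  rw [Matrix.charpoly, ← Polynomial.coe_evalRingHom, RingHom.map_det]
  congr 1
  ext i j
  by_cases h : i = j <;>
    simp [Matrix.charmatrix_apply, Matrix.diagonal, h]

lemma star_dot_conj (a b : ι → ℂ) : star a ⬝ᵥ b = conj (star b ⬝ᵥ a) := by
  simp only [dotProduct, Pi.star_apply, map_sum, _root_.map_mul, Complex.conj_conj]
  exact Finset.sum_congr rfl fun i _ => by simp [Complex.star_def, mul_comm]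

lemma re_star_dot (M : Matrix ι ι ℝ) (z : ι → ℂ) :
    (star z ⬝ᵥ (M.map Complex.ofReal) *ᵥ z).re
      = (fun i => (z i).re) ⬝ᵥ M *ᵥ (fun i => (z i).re)
        + (fun i => (z i).im) ⬝ᵥ M *ᵥ (fun i => (z i).im) := by
  simp only [dotProduct, mulVec, Pi.star_apply, Matrix.map_apply]
  rw [Complex.re_sum, ← Finset.sum_add_distrib]
  refine Finset.sum_congr rfl fun i _ => ?_
  rw [Complex.mul_re, Complex.re_sum, Complex.im_sum]
  simp only [Complex.conj_re, Complex.conj_im, Complex.re_ofReal_mul, Complex.im_ofReal_mul,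
    Finset.mul_sum, Complex.star_def]
  rw [← Finset.sum_sub_distrib, ← Finset.sum_add_distrib]
  exact Finset.sum_congr rfl fun j _ => by ring

lemma im_star_dot_symm (M : Matrix ι ι ℝ) (hM : Mᵀ = M) (z : ι → ℂ) :
    (star z ⬝ᵥ (M.map Complex.ofReal) *ᵥ z).im = 0 := by
  simp only [dotProduct, mulVec, Pi.star_apply, Matrix.map_apply, Complex.star_def]
  rw [Complex.im_sum]
  have key : ∀ i, ((starRingEnd ℂ) (z i) * ∑ j, (M i j : ℂ) * z j).im
      = ∑ j, M i j * ((z i).re * (z j).im) - ∑ j, M i j * ((z i).im * (z j).re) := by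
    intro i
    rw [Complex.mul_im, Complex.re_sum, Complex.im_sum]
    simp only [Complex.conj_re, Complex.conj_im, Complex.re_ofReal_mul, Complex.im_ofReal_mul,
      Finset.mul_sum, neg_mul, ← Finset.sum_neg_distrib]
    rw [← Finset.sum_add_distrib, ← Finset.sum_sub_distrib]
    exact Finset.sum_congr rfl fun j _ => by ring
  rw [Finset.sum_congr rfl fun i _ => key i, Finset.sum_sub_distrib, sub_eq_zero]
  conv_rhs => rw [Finset.sum_comm]
  refine Finset.sum_congr rfl fun i _ => Finset.sum_congr rfl fun j _ => ?_
  have hij : M i j = M j i := by conv_lhs => rw [← hM, Matrix.transpose_apply]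
  rw [hij]
  ring

lemma mulVec_map_re (M : Matrix ι ι ℝ) (z : ι → ℂ) (i : ι) :
    (((M.map Complex.ofReal) *ᵥ z) i).re = (M *ᵥ (fun j => (z j).re)) i := by
  simp only [mulVec, dotProduct, Matrix.map_apply]
  rw [Complex.re_sum]
  exact Finset.sum_congr rfl fun j _ => Complex.re_ofReal_mul _ _

lemma mulVec_map_im (M : Matrix ι ι ℝ) (z : ι → ℂ) (i : ι) :
    (((M.map Complex.ofReal) *ᵥ z) i).im = (M *ᵥ (fun j => (z j).im)) i := by
  simp only [mulVec, dotProduct, Matrix.map_apply]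
  rw [Complex.im_sum]
  exact Finset.sum_congr rfl fun j _ => Complex.im_ofReal_mul _ _

lemma natTrailing_map (p : Polynomial ℝ) :
    (p.map (Complex.ofRealHom)).natTrailingDegree = p.natTrailingDegree := by
  unfold Polynomial.natTrailingDegree Polynomial.trailingDegree
  rw [Polynomial.support_map_of_injective p Complex.ofReal_injective]

end Cplx

end AbsSHelp

/-- For scaling matrices `S_i` that are positive or negative definite (with `|S_i| = sgn(S_i) S_i`)
and `L` the Laplacian of a connected undirected graph on `n` vertices, the matrix `|S| L̄`
(with `|S| = blkdiag(|S_1|,…,|S_n|)` and `L̄ = L ⊗ I_d`) has exactly `d` zero eigenvalues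
(counted with algebraic multiplicity), and all of its nonzero eigenvalues have strictly
positive real part. -/
theorem absS_mul_laplacian_spectrum (n d : ℕ) (G : SimpleGraph (Fin n)) [DecidableRel G.Adj]
    (hconn : G.Connected) (S : Fin n → Matrix (Fin d) (Fin d) ℝ) (s : Fin n → ℝ)
    (hS : ∀ i, (PosDefMat (S i) ∧ s i = 1) ∨ (NegDefMat (S i) ∧ s i = -1)) :
    Multiset.count 0
        (((blkDiag (fun i => s i • S i) *
          (G.lapMatrix ℝ ⊗ₖ (1 : Matrix (Fin d) (Fin d) ℝ))).map
            (Complex.ofReal)).charpoly).roots = d ∧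
    ∀ μ ∈ (((blkDiag (fun i => s i • S i) *
          (G.lapMatrix ℝ ⊗ₖ (1 : Matrix (Fin d) (Fin d) ℝ))).map
            (Complex.ofReal)).charpoly).roots, μ ≠ 0 → 0 < μ.re := by
  classical
  set A : Matrix (Fin n × Fin d) (Fin n × Fin d) ℝ := blkDiag (fun i => s i • S i) with hA
  set Lb : Matrix (Fin n × Fin d) (Fin n × Fin d) ℝ :=
    G.lapMatrix ℝ ⊗ₖ (1 : Matrix (Fin d) (Fin d) ℝ) with hLbdef
  have hpsd : Lb.PosSemidef := AbsSHelp.kron_posSemidef G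
  have hApos := AbsSHelp.A_posDef S s hS
  have hAnonneg : ∀ x, 0 ≤ x ⬝ᵥ A *ᵥ x := by
    intro x
    by_cases hx : x = 0
    · simp [hx]
    · exact (hApos x hx).le
  have hAinj := AbsSHelp.A_mulVec_injective S s hS
  have hLbsymm : Lbᵀ = Lb := AbsSHelp.kron_transpose_symm _ (G.isSymm_lapMatrix (R := ℝ))
  set B : Matrix (Fin n × Fin d) (Fin n × Fin d) ℝ := A * Lb with hB
  have hmapeq : (B.map Complex.ofReal) = B.map (⇑Complex.ofRealHom) := rfl
  constructor
  · rw [Polynomial.count_roots, Polynomial.rootMultiplicity_eq_natTrailingDegree',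
        hmapeq, Matrix.charpoly_map, AbsSHelp.natTrailing_map,
        AbsSHelp.natTrailing_eq_finrank_ker B (AbsSHelp.key_stab hpsd A hApos hAinj)]
    have hker : LinearMap.ker (Matrix.toLin' B) = LinearMap.ker (Matrix.toLin' Lb) := by
      ext z
      simp only [LinearMap.mem_ker, Matrix.toLin'_apply]
      constructor
      · intro h
        apply hAinj
        rwa [mulVec_mulVec]
      · intro h
        rw [hB, ← mulVec_mulVec, h, mulVec_zero]
    rw [hker]
    exact AbsSHelp.finrank_ker_kron G hconn
  · intro μ hμroot hμ0
    set Ac := A.map Complex.ofReal with hAc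
    set Lbc := Lb.map Complex.ofReal with hLbc
    have hBc : B.map Complex.ofReal = Ac * Lbc := Matrix.map_mul (f := Complex.ofRealHom)
    have hroot : ((B.map Complex.ofReal).charpoly).IsRoot μ :=
      (Polynomial.mem_roots'.mp hμroot).2
    have hdet : Matrix.det (Matrix.diagonal (fun _ => μ) - B.map Complex.ofReal) = 0 := by
      rw [← AbsSHelp.eval_charpoly_det]
      exact hroot
    obtain ⟨v, hv0, hv⟩ := (Matrix.exists_mulVec_eq_zero_iff).mpr hdet
    have heig : (B.map Complex.ofReal) *ᵥ v = μ • v := by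
      rw [Matrix.sub_mulVec] at hv
      have h2 : Matrix.diagonal (fun _ : Fin n × Fin d => μ) *ᵥ v = μ • v := by
        funext i
        rw [Matrix.mulVec_diagonal]
        rfl
      rw [h2] at hv
      exact (sub_eq_zero.mp hv).symm
    set y := Lbc *ᵥ v with hy
    have hAy : Ac *ᵥ y = μ • v := by rw [hy, mulVec_mulVec, ← hBc, heig]
    have hyne : y ≠ 0 := by
      intro h0
      rw [h0, mulVec_zero] at hAy
      rcases smul_eq_zero.mp hAy.symm with h | h
      · exact hμ0 h
      · exact hv0 h
    -- the Rayleigh quotient c = ⟨v, Lb v⟩ is real and positive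
    have hcim : (star v ⬝ᵥ y).im = 0 := AbsSHelp.im_star_dot_symm Lb hLbsymm v
    have hcre : (star v ⬝ᵥ y).re
        = (fun i => (v i).re) ⬝ᵥ Lb *ᵥ (fun i => (v i).re)
          + (fun i => (v i).im) ⬝ᵥ Lb *ᵥ (fun i => (v i).im) := AbsSHelp.re_star_dot Lb v
    have hcre_pos : 0 < (star v ⬝ᵥ y).re := by
      have hnn1 := AbsSHelp.quad_nonneg hpsd (fun i => (v i).re)
      have hnn2 := AbsSHelp.quad_nonneg hpsd (fun i => (v i).im)
      rcases lt_or_eq_of_le (by rw [hcre]; linarith : (0:ℝ) ≤ (star v ⬝ᵥ y).re) with h | h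
      · exact h
      · exfalso
        have h1 : (fun i => (v i).re) ⬝ᵥ Lb *ᵥ (fun i => (v i).re) = 0 := by
          rw [hcre] at h
          linarith
        have h2 : (fun i => (v i).im) ⬝ᵥ Lb *ᵥ (fun i => (v i).im) = 0 := by
          rw [hcre] at h
          linarith
        have hz1 := AbsSHelp.quad_zero hpsd _ h1
        have hz2 := AbsSHelp.quad_zero hpsd _ h2
        apply hyne
        funext i
        apply Complex.ext
        · rw [hy, AbsSHelp.mulVec_map_re, hz1]
          rfl
        · rw [hy, AbsSHelp.mulVec_map_im, hz2]
          rfl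
    -- the numerator ⟨y, A y⟩ has positive real part
    have hq : star y ⬝ᵥ (Ac *ᵥ y) = μ * (starRingEnd ℂ) (star v ⬝ᵥ y) := by
      rw [hAy, dotProduct_smul, smul_eq_mul, AbsSHelp.star_dot_conj]
    have hqre : (star y ⬝ᵥ (Ac *ᵥ y)).re = μ.re * (star v ⬝ᵥ y).re := by
      rw [hq, Complex.mul_re, Complex.conj_re, Complex.conj_im, hcim]
      ring
    have hqre_pos : 0 < (star y ⬝ᵥ (Ac *ᵥ y)).re := by
      rw [AbsSHelp.re_star_dot A y]
      have hne : (fun i => (y i).re) ≠ 0 ∨ (fun i => (y i).im) ≠ 0 := by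
        by_contra hcon
        push_neg at hcon
        apply hyne
        funext i
        apply Complex.ext
        · exact congrFun hcon.1 i
        · exact congrFun hcon.2 i
      rcases hne with h | h
      · have := hApos _ h
        have := hAnonneg (fun i => (y i).im)
        linarith
      · have := hApos _ h
        have := hAnonneg (fun i => (y i).re)
        linarith
    nlinarith [hcre_pos, hqre_pos, hqre]
end

section
/- Consider the dynamics q'(τ) = -β|S|L̄ q̂(τ_l) on each interval [τ_l, τ_{l+1}) with held state q̂(τ_l), and measurement error ε(τ) = q̂(τ_l) - q(τ). Define V(τ) = (1/2) q(τ)^T L̄ q(τ) and ẑ(τ_l) = L̄ q̂(τ_l). Then V'(τ) = -β ẑ(τ_l)^T |S| ẑ(τ_l) + β ẑ(τ_l)^T |S|^T L̄ ε(τ_l) + β² (τ - τ_l) ẑ(τ_l)^T |S|^T L̄ |S| ẑ(τ_l). -/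
open Matrix
open scoped Kronecker

private lemma hasDerivAt_quadForm {ι : Type*} [Fintype ι] (A : Matrix ι ι ℝ)
    (q : ℝ → ι → ℝ) (v : ι → ℝ) (τ : ℝ) (h : HasDerivAt q v τ) :
    HasDerivAt (fun t => q t ⬝ᵥ A.mulVec (q t))
      (v ⬝ᵥ A.mulVec (q τ) + q τ ⬝ᵥ A.mulVec v) τ := by
  have hcoord : ∀ i, HasDerivAt (fun t => q t i) (v i) τ := hasDerivAt_pi.mp h
  have : ∀ i : ι, HasDerivAt (fun t => q t i * ∑ j, A i j * q t j)
      (v i * ∑ j, A i j * q τ j + q τ i * ∑ j, A i j * v j) τ := by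
    intro i
    exact (hcoord i).mul (HasDerivAt.fun_sum fun j _ => (hcoord j).const_mul (A i j))
  have hsum := HasDerivAt.fun_sum (fun i (_ : i ∈ Finset.univ) => this i)
  have hfun : (fun t => ∑ i, q t i * ∑ j, A i j * q t j)
      = (fun t => q t ⬝ᵥ A.mulVec (q t)) := by
    funext t; simp [dotProduct, mulVec]
  have hval : (v ⬝ᵥ A.mulVec (q τ) + q τ ⬝ᵥ A.mulVec v)
      = ∑ i, (v i * ∑ j, A i j * q τ j + q τ i * ∑ j, A i j * v j) := by
    simp [dotProduct, mulVec, Finset.sum_add_distrib]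
  rw [hval, ← hfun]
  exact hsum

/-- On a sampling interval `[τ_l, τ_{l+1})`, for the held-state dynamics
`q'(τ) = -β |S| L̄ q̂(τ_l)` with measurement error `ε(τ) = q̂(τ_l) - q(τ)`,
the Lyapunov function `V(τ) = (1/2) q(τ)ᵀ L̄ q(τ)` satisfies
`V'(τ) = -β ẑᵀ|S|ẑ + β ẑᵀ|S|ᵀ L̄ ε(τ_l) + β²(τ-τ_l) ẑᵀ|S|ᵀ L̄ |S| ẑ`,
where `ẑ = L̄ q̂(τ_l)`. -/
theorem lyapunov_derivative_formula (n d : ℕ) (G : SimpleGraph (Fin n)) [DecidableRel G.Adj]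
    (absS : Fin n → Matrix (Fin d) (Fin d) ℝ) (β τl τl1 : ℝ) (hβ : 0 < β)
    (qhat : Fin n × Fin d → ℝ) (q : ℝ → (Fin n × Fin d → ℝ))
    (hq : ∀ τ ∈ Set.Ico τl τl1,
      HasDerivAt q (-β • ((blkDiag absS).mulVec
        ((G.lapMatrix ℝ ⊗ₖ (1 : Matrix (Fin d) (Fin d) ℝ)).mulVec qhat))) τ) :
    ∀ τ ∈ Set.Ico τl τl1,
      HasDerivAt (fun τ => (1 / 2 : ℝ) * (q τ ⬝ᵥ
          (G.lapMatrix ℝ ⊗ₖ (1 : Matrix (Fin d) (Fin d) ℝ)).mulVec (q τ)))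
        (-β * ((G.lapMatrix ℝ ⊗ₖ (1 : Matrix (Fin d) (Fin d) ℝ)).mulVec qhat ⬝ᵥ
            (blkDiag absS).mulVec ((G.lapMatrix ℝ ⊗ₖ (1 : Matrix (Fin d) (Fin d) ℝ)).mulVec qhat))
          + β * ((G.lapMatrix ℝ ⊗ₖ (1 : Matrix (Fin d) (Fin d) ℝ)).mulVec qhat ⬝ᵥ
            (blkDiag absS)ᵀ.mulVec ((G.lapMatrix ℝ ⊗ₖ (1 : Matrix (Fin d) (Fin d) ℝ)).mulVec
              (qhat - q τl)))
          + β ^ 2 * (τ - τl) * ((G.lapMatrix ℝ ⊗ₖ (1 : Matrix (Fin d) (Fin d) ℝ)).mulVec qhat ⬝ᵥ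
            (blkDiag absS)ᵀ.mulVec ((G.lapMatrix ℝ ⊗ₖ (1 : Matrix (Fin d) (Fin d) ℝ)).mulVec
              ((blkDiag absS).mulVec
                ((G.lapMatrix ℝ ⊗ₖ (1 : Matrix (Fin d) (Fin d) ℝ)).mulVec qhat))))) τ := by
  intro τ hτ
  set L : Matrix (Fin n × Fin d) (Fin n × Fin d) ℝ :=
    G.lapMatrix ℝ ⊗ₖ (1 : Matrix (Fin d) (Fin d) ℝ) with hLdef
  set S := blkDiag absS with hSdef
  set z : Fin n × Fin d → ℝ := L.mulVec qhat with hz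
  set w : Fin n × Fin d → ℝ := S.mulVec z with hw
  have hLsymm : Lᵀ = L := by
    rw [hLdef, ← kroneckerMap_transpose]
    rw [(G.isSymm_lapMatrix (R := ℝ)).eq, transpose_one]
  -- q is affine on the interval
  have haffine : q τ = q τl + (τ - τl) • ((-β) • w) := by
    have hIcc : Set.Icc τl τ ⊆ Set.Ico τl τl1 := fun x hx =>
      ⟨hx.1, lt_of_le_of_lt hx.2 hτ.2⟩
    have hg : ∀ x ∈ Set.Icc τl τ,
        HasDerivWithinAt (fun t => q t - t • ((-β) • w)) 0 (Set.Icc τl τ) x := by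
      intro x hx
      have := (hq x (hIcc hx)).fun_sub ((hasDerivAt_id x).smul_const ((-β) • w))
      simpa using this.hasDerivWithinAt
    have hb := (convex_Icc τl τ).norm_image_sub_le_of_norm_hasDerivWithin_le
      (f' := fun _ => 0) (C := 0) hg
      (fun x _ => by simp) (Set.left_mem_Icc.mpr hτ.1) (Set.right_mem_Icc.mpr hτ.1)
    rw [zero_mul] at hb
    have heq : q τ - τ • ((-β) • w) = q τl - τl • ((-β) • w) := by
      have := norm_le_zero_iff.mp hb
      have := sub_eq_zero.mp this
      simpa using this
    have : q τ = q τl - τl • ((-β) • w) + τ • ((-β) • w) := by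
      rw [← heq]; abel
    rw [this, sub_smul]; abel
  -- derivative of the quadratic form
  have hderiv := hasDerivAt_quadForm L q ((-β) • w) τ (hq τ hτ)
  have hmain := hderiv.const_mul (1 / 2 : ℝ)
  convert hmain using 1
  case e'_4 => rfl
  case e'_5 => rfl
  -- value equality
  have hdp : ∀ x : Fin n × Fin d → ℝ, q τ ⬝ᵥ L.mulVec x = L.mulVec (q τ) ⬝ᵥ x := by
    intro x
    rw [dotProduct_mulVec, ← vecMul_transpose, hLsymm, dotProduct_comm]
  have hST : ∀ x : Fin n × Fin d → ℝ, z ⬝ᵥ Sᵀ.mulVec x = w ⬝ᵥ x := by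
    intro x
    rw [dotProduct_mulVec, vecMul_transpose, hw]
  rw [hST, hST, haffine]
  have hcomm : z ⬝ᵥ w = w ⬝ᵥ z := dotProduct_comm _ _
  simp only [mulVec_add, mulVec_smul, mulVec_sub, dotProduct_add, dotProduct_smul,
    smul_dotProduct, dotProduct_sub, smul_eq_mul, neg_smul, mulVec_neg, dotProduct_neg,
    neg_dotProduct, ← hz]
  have hdp2 : q τl ⬝ᵥ L.mulVec w = w ⬝ᵥ L.mulVec (q τl) := by
    rw [dotProduct_mulVec, ← vecMul_transpose, hLsymm, dotProduct_comm]
  have hdp3 : q τl ⬝ᵥ z = w ⬝ᵥ 0 + z ⬝ᵥ q τl := by simp [dotProduct_comm]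
  simp only [add_dotProduct, smul_dotProduct, neg_smul, neg_dotProduct, smul_eq_mul,
    hdp2, hcomm]
  ring
end

section
/- Let ζ : [0,∞) → R^m satisfy ζ'(τ) = -βA ζ(τ) - βA ε(τ) where ‖ε(τ)‖ ≤ √n ε̄ for τ ∈ [τ_l, τ_{l+1}), and the zero-eigenspace projection annihilates both ζ and Aε. Then ‖ζ(τ)‖ ≤ c_2 ε̄ + e^{-β Re(Λ_1)(τ-τ_l)} ( c_1 ‖ζ(τ_l)‖ - c_2 ε̄ ) for τ ∈ [τ_l, τ_{l+1}), where c_1 = ‖W‖‖W^{-1}‖ and c_2 = c_1 ‖A‖ √n / Re(Λ_1). -/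
open Matrix

attribute [local instance] Matrix.linftyOpNormedAddCommGroup Matrix.linftyOpNormedRing
  Matrix.linftyOpNormedAlgebra

lemma myIntegralExpMul (c a b : ℝ) (hc : c ≠ 0) :
    ∫ s in a..b, Real.exp (c * s) = (Real.exp (c * b) - Real.exp (c * a)) / c := by
  have h : ∀ x : ℝ, HasDerivAt (fun s => Real.exp (c * s) / c) (Real.exp (c * x)) x := by
    intro x
    have := (((hasDerivAt_id x).const_mul c).exp).div_const c
    simpa [mul_one, mul_div_assoc, mul_comm, mul_div_cancel_left₀ _ hc] using this
  rw [intervalIntegral.integral_eq_sub_of_hasDerivAt (fun x _ => h x)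
    ((Real.continuous_exp.comp (continuous_const.mul continuous_id)).intervalIntegrable a b)]
  ring

lemma myExpDivMono {a b x : ℝ} (ha : 0 < a) (hab : a ≤ b) (hx : 0 ≤ x) :
    (1 - Real.exp (-(b * x))) / b ≤ (1 - Real.exp (-(a * x))) / a := by
  have hb : 0 < b := lt_of_lt_of_le ha hab
  have h1 : (1 - Real.exp (-(b * x))) / b = ∫ s in (0:ℝ)..x, Real.exp (-b * s) := by
    rw [myIntegralExpMul (-b) 0 x (by simp; positivity)]
    simp [neg_mul]; ring
  have h2 : (1 - Real.exp (-(a * x))) / a = ∫ s in (0:ℝ)..x, Real.exp (-a * s) := by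
    rw [myIntegralExpMul (-a) 0 x (by simp; positivity)]
    simp [neg_mul]; ring
  rw [h1, h2]
  apply intervalIntegral.integral_mono_on hx
  · exact (Real.continuous_exp.comp (continuous_const.mul continuous_id)).intervalIntegrable 0 x
  · exact (Real.continuous_exp.comp (continuous_const.mul continuous_id)).intervalIntegrable 0 x
  · intro s hs
    exact Real.exp_le_exp.2 (by nlinarith [hs.1])

/-- Variation-of-constants decay bound. Let `ζ` satisfy `ζ'(τ) = -βAζ(τ) - βAε(τ)` on
`[τ_l, τ_{l+1})`, with `‖ε(τ)‖ ≤ √n ε̄`, where `A` is diagonalizable as `A = W J W⁻¹`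
over `ℂ` with eigenvalues either `0` or with real part `≥ Re(Λ₁) > 0`, and the
zero-eigenspace projection annihilates `ζ(τ_l)` and `Aε(τ)` (i.e. they lie in `im(A^m)`).
Then `‖ζ(τ)‖ ≤ c₂ ε̄ + e^{-β Re(Λ₁)(τ-τ_l)} (c₁ ‖ζ(τ_l)‖ - c₂ ε̄)` with
`c₁ = ‖W‖‖W⁻¹‖` and `c₂ = c₁ ‖A‖ √n / Re(Λ₁)`. -/
theorem disagreement_decay_bound (m n : ℕ)
    (A : Matrix (Fin m) (Fin m) ℝ)
    (W : Matrix (Fin m) (Fin m) ℂ) (hW : IsUnit W)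
    (ev : Fin m → ℂ) (hA : A.map Complex.ofReal = W * Matrix.diagonal ev * W⁻¹)
    (Λ1re : ℝ) (hΛ1 : 0 < Λ1re) (hev : ∀ i, ev i = 0 ∨ Λ1re ≤ (ev i).re)
    (β : ℝ) (hβ : 0 < β) (τl τl1 : ℝ) (hτ : τl < τl1)
    (ζ ε : ℝ → (Fin m → ℝ))
    (hεcont : ContinuousOn ε (Set.Icc τl τl1))
    (hode : ∀ τ ∈ Set.Ico τl τl1,
      HasDerivAt ζ (-β • (A.mulVec (ζ τ) + A.mulVec (ε τ))) τ)
    (εbar : ℝ) (hεbar0 : 0 ≤ εbar)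
    (hεbd : ∀ τ ∈ Set.Ico τl τl1, ‖ε τ‖ ≤ Real.sqrt n * εbar)
    (hζ0 : ∃ y : Fin m → ℝ, ζ τl = (A ^ m).mulVec y)
    (hAε : ∀ τ ∈ Set.Ico τl τl1, ∃ y : Fin m → ℝ, A.mulVec (ε τ) = (A ^ m).mulVec y) :
    ∀ τ ∈ Set.Ico τl τl1,
      ‖ζ τ‖ ≤ (‖W‖ * ‖W⁻¹‖ * ‖A‖ * Real.sqrt n / Λ1re) * εbar
        + Real.exp (-(β * Λ1re * (τ - τl))) *
            (‖W‖ * ‖W⁻¹‖ * ‖ζ τl‖ - (‖W‖ * ‖W⁻¹‖ * ‖A‖ * Real.sqrt n / Λ1re) * εbar) := by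
  intro τ hτm
  obtain ⟨hτl, hτu⟩ := hτm
  have hdet : IsUnit W.det := (Matrix.isUnit_iff_isUnit_det W).1 hW
  have hWW : W * W⁻¹ = 1 := Matrix.mul_nonsing_inv W hdet
  have hWW' : W⁻¹ * W = 1 := Matrix.nonsing_inv_mul W hdet
  set Ac : Matrix (Fin m) (Fin m) ℂ := A.map Complex.ofReal with hAcdef
  set D : Matrix (Fin m) (Fin m) ℂ := Matrix.diagonal ev with hDdef
  have hDW : W⁻¹ * Ac = D * W⁻¹ := by
    rw [hA, ← mul_assoc, ← mul_assoc, hWW', one_mul]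
  set ζc : ℝ → Fin m → ℂ := fun s i => ((ζ s i : ℝ) : ℂ) with hζcdef
  set εc : ℝ → Fin m → ℂ := fun s i => ((ε s i : ℝ) : ℂ) with hεcdef
  set η : ℝ → Fin m → ℂ := fun s => (W⁻¹).mulVec (ζc s) with hηdef
  have hnorm : ∀ v : Fin m → ℝ, ‖(fun i => ((v i : ℝ) : ℂ))‖ = ‖v‖ := by
    intro v
    simp [Pi.norm_def, Pi.nnnorm_def]
  have hAcnorm : ‖Ac‖ = ‖A‖ := by
    rw [← coe_nnnorm, ← coe_nnnorm]
    congr 1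
    simp [Matrix.linfty_opNNNorm_def, hAcdef, Matrix.map_apply]
  have hmapmul : ∀ (M : Matrix (Fin m) (Fin m) ℝ) (v : Fin m → ℝ) (i : Fin m),
      ((M.mulVec v i : ℝ) : ℂ) = (M.map Complex.ofReal).mulVec (fun j => ((v j : ℝ) : ℂ)) i := by
    intro M v i
    have := RingHom.map_mulVec Complex.ofRealHom M v i
    exact this
  have hdiag : ∀ x : Fin m → ℂ,
      (W⁻¹).mulVec (Ac.mulVec x) = fun i => ev i * ((W⁻¹).mulVec x i) := by
    intro x
    rw [Matrix.mulVec_mulVec, hDW, ← Matrix.mulVec_mulVec]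
    funext i
    rw [hDdef, Matrix.mulVec_diagonal]
  -- derivative of η components
  have hηd : ∀ s ∈ Set.Ico τl τl1, ∀ i : Fin m,
      HasDerivAt (fun u => η u i)
        (-(β:ℂ) * (ev i * η s i + (W⁻¹).mulVec (Ac.mulVec (εc s)) i)) s := by
    intro s hs i
    have h1 : ∀ j, HasDerivAt (fun u => ζ u j)
        ((-β • (A.mulVec (ζ s) + A.mulVec (ε s))) j) s :=
      fun j => hasDerivAt_pi.1 (hode s hs) j
    have h2 : HasDerivAt (fun u => η u i)
        (∑ j, W⁻¹ i j * (((-β • (A.mulVec (ζ s) + A.mulVec (ε s))) j : ℝ) : ℂ)) s := by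
      have heq : (fun u => η u i) = fun u => ∑ j, W⁻¹ i j * ζc u j := by
        funext u
        simp [hηdef, Matrix.mulVec, dotProduct]
      rw [heq]
      exact HasDerivAt.fun_sum fun j _ => ((h1 j).ofReal_comp).const_mul _
    convert h2 using 1
    have hv : ∀ j, (((-β • (A.mulVec (ζ s) + A.mulVec (ε s))) j : ℝ) : ℂ)
        = -(β:ℂ) * (Ac.mulVec (ζc s) j + Ac.mulVec (εc s) j) := by
      intro j
      simp only [Pi.smul_apply, Pi.add_apply, smul_eq_mul, Complex.ofReal_mul,
        Complex.ofReal_add, Complex.ofReal_neg]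
      rw [hmapmul A (ζ s) j, hmapmul A (ε s) j, ← hAcdef]
    have hζη : (W⁻¹).mulVec (Ac.mulVec (ζc s)) i = ev i * η s i := by
      rw [hdiag (ζc s)]
    have hsum : ∑ j, W⁻¹ i j * (((-β • (A.mulVec (ζ s) + A.mulVec (ε s))) j : ℝ) : ℂ)
        = -(β:ℂ) * ((W⁻¹).mulVec (Ac.mulVec (ζc s)) i + (W⁻¹).mulVec (Ac.mulVec (εc s)) i) := by
      calc ∑ j, W⁻¹ i j * (((-β • (A.mulVec (ζ s) + A.mulVec (ε s))) j : ℝ) : ℂ)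
          = -(β:ℂ) * ∑ j, (W⁻¹ i j * (Ac.mulVec (ζc s)) j + W⁻¹ i j * (Ac.mulVec (εc s)) j) := by
            rw [Finset.mul_sum]
            exact Finset.sum_congr rfl fun j _ => by rw [hv j]; ring
        _ = _ := by rw [Finset.sum_add_distrib]; rfl
    rw [hsum, hζη]
  -- setup of constants
  set t := τ - τl with htdef
  have ht0 : 0 ≤ t := sub_nonneg.2 hτl
  set E := Real.exp (-(β * Λ1re * t)) with hEdef
  have hE0 : 0 < E := Real.exp_pos _
  have hE1 : E ≤ 1 := by
    rw [hEdef]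
    apply Real.exp_le_one_iff.2
    nlinarith [mul_nonneg (mul_nonneg hβ.le hΛ1.le) ht0]
  set C0 := ‖A‖ * ‖W⁻¹‖ * (Real.sqrt n * εbar) with hC0def
  have hC00 : 0 ≤ C0 := by
    have := Real.sqrt_nonneg (n : ℝ)
    positivity
  set K := ‖W⁻¹‖ * ‖ζ τl‖ with hKdef
  have hK0 : 0 ≤ K := by positivity
  set B := K * E + C0 / Λ1re * (1 - E) with hBdef
  have hB0 : 0 ≤ B := by
    apply add_nonneg (mul_nonneg hK0 hE0.le)
    exact mul_nonneg (div_nonneg hC00 hΛ1.le) (by linarith)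
  have hsubIcc : Set.uIcc τl τ ⊆ Set.Icc τl τl1 := by
    rw [Set.uIcc_of_le hτl]
    exact Set.Icc_subset_Icc le_rfl hτu.le
  have hsubIco : Set.uIcc τl τ ⊆ Set.Ico τl τl1 := by
    rw [Set.uIcc_of_le hτl]
    intro x hx
    exact ⟨hx.1, lt_of_le_of_lt hx.2 hτu⟩
  have hεnorm : ∀ s, ‖εc s‖ = ‖ε s‖ := fun s => hnorm (ε s)
  have hηl : ∀ i, ‖η τl i‖ ≤ K := by
    intro i
    calc ‖η τl i‖ ≤ ‖η τl‖ := norm_le_pi_norm _ i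
    _ ≤ ‖W⁻¹‖ * ‖ζc τl‖ := Matrix.linfty_opNorm_mulVec _ _
    _ = K := by rw [hKdef, hnorm (ζ τl)]
  have key : ∀ i : Fin m, ‖η τ i‖ ≤ B := by
    intro i
    set ψ : ℝ → ℂ := fun u => Complex.exp ((β:ℂ) * ev i * u) * η u i with hψdef
    set g : ℝ → ℂ := fun u =>
      Complex.exp ((β:ℂ) * ev i * u) * (-(β:ℂ) * ((W⁻¹).mulVec (Ac.mulVec (εc u)) i)) with hgdef
    have hψd : ∀ s ∈ Set.Ico τl τl1, HasDerivAt ψ (g s) s := by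
      intro s hs
      have h0 : HasDerivAt (fun u : ℝ => ((β:ℂ) * ev i) * (u:ℂ)) ((β:ℂ) * ev i) s := by
        simpa using (Complex.ofRealCLM.hasDerivAt (x := s)).const_mul ((β:ℂ) * ev i)
      have hexp : HasDerivAt (fun u : ℝ => Complex.exp ((β:ℂ) * ev i * u))
          (Complex.exp ((β:ℂ) * ev i * s) * ((β:ℂ) * ev i)) s := h0.cexp
      have hmul := hexp.fun_mul (hηd s hs i)
      convert hmul using 1
      · rfl
      ring
    have hgcont : ContinuousOn g (Set.Icc τl τl1) := by
      apply ContinuousOn.mul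
      · exact (Complex.continuous_exp.comp
          (continuous_const.mul Complex.continuous_ofReal)).continuousOn
      · apply ContinuousOn.mul continuousOn_const
        have hrepr : (fun u => (W⁻¹).mulVec (Ac.mulVec (εc u)) i)
            = fun u => ∑ j, W⁻¹ i j * ∑ k, Ac j k * ((ε u k : ℝ) : ℂ) := rfl
        rw [hrepr]
        apply continuousOn_finset_sum
        intro j _
        apply ContinuousOn.mul continuousOn_const
        apply continuousOn_finset_sum
        intro k _
        exact ContinuousOn.mul continuousOn_const
          (Complex.continuous_ofReal.comp_continuousOn
            ((continuous_apply k).comp_continuousOn hεcont))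
    have hFTC : ∫ s in τl..τ, g s = ψ τ - ψ τl :=
      intervalIntegral.integral_eq_sub_of_hasDerivAt (fun s hs => hψd s (hsubIco hs))
        ((hgcont.mono hsubIcc).intervalIntegrable)
    rcases hev i with h0 | hr
    · -- zero eigenvalue: η τ i = η τl i = 0
      have hg0 : ∀ u, g u = 0 := by
        intro u
        have hx : ((W⁻¹ * Ac).mulVec (εc u)) i = 0 := by
          rw [← Matrix.mulVec_mulVec, hdiag (εc u)]
          simp [h0]
        simp [hgdef, hx]
      have hψeq : ψ τ = ψ τl := by
        have hz : ∫ s in τl..τ, g s = 0 := by simp [hg0]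
        have := hFTC.symm.trans hz
        linear_combination this
      have hψη : ∀ u : ℝ, ψ u = η u i := by
        intro u
        simp [hψdef, h0]
      have hηeq : η τ i = η τl i := by
        rw [← hψη τ, ← hψη τl, hψeq]
      obtain ⟨y, hy⟩ := hζ0
      have hm : m ≠ 0 := Nat.pos_iff_ne_zero.1 i.pos
      have hAcpow : ∀ k : ℕ, W⁻¹ * Ac ^ k = D ^ k * W⁻¹ := by
        intro k
        induction k with
        | zero => simp
        | succ k ih =>
          rw [pow_succ, ← mul_assoc, ih, mul_assoc, hDW, ← mul_assoc, ← pow_succ]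
      have hpow : (A ^ m).map Complex.ofReal = Ac ^ m := by
        have := map_pow (Complex.ofRealHom.mapMatrix) A m
        exact this
      have hζcl : ζc τl = (Ac ^ m).mulVec (fun j => ((y j : ℝ) : ℂ)) := by
        funext j
        have h1 : ζc τl j = (((A ^ m).mulVec y j : ℝ) : ℂ) := by
          rw [hζcdef]
          exact congrArg _ (congrFun hy j)
        rw [h1, hmapmul (A ^ m) y j, hpow]
      have hηl0 : η τl i = 0 := by
        have hrw : η τl = (D ^ m).mulVec ((W⁻¹).mulVec (fun j => ((y j : ℝ) : ℂ))) := by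
          show (W⁻¹).mulVec (ζc τl) = _
          rw [hζcl, Matrix.mulVec_mulVec, hAcpow m, ← Matrix.mulVec_mulVec]
        rw [hrw, hDdef, Matrix.diagonal_pow, Matrix.mulVec_diagonal]
        simp [h0, zero_pow hm]
      rw [hηeq, hηl0, norm_zero]
      exact hB0
    · -- nonzero eigenvalue
      set r := (ev i).re with hrdef
      have hr0 : 0 < r := lt_of_lt_of_le hΛ1 hr
      have hexpnorm : ∀ s : ℝ, ‖Complex.exp ((β:ℂ) * ev i * s)‖ = Real.exp (β * r * s) := by
        intro s
        rw [Complex.norm_exp]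
        congr 1
        simp [Complex.mul_re, hrdef]
      have hgbd : ∀ s ∈ Set.Icc τl τ, ‖g s‖ ≤ Real.exp (β * r * s) * (β * C0) := by
        intro s hs
        have hsIco : s ∈ Set.Ico τl τl1 := ⟨hs.1, lt_of_le_of_lt hs.2 hτu⟩
        have hx : ‖(W⁻¹).mulVec (Ac.mulVec (εc s)) i‖ ≤ C0 := by
          calc ‖(W⁻¹).mulVec (Ac.mulVec (εc s)) i‖
              ≤ ‖(W⁻¹).mulVec (Ac.mulVec (εc s))‖ := norm_le_pi_norm _ i
          _ ≤ ‖W⁻¹‖ * ‖Ac.mulVec (εc s)‖ := Matrix.linfty_opNorm_mulVec _ _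
          _ ≤ ‖W⁻¹‖ * (‖Ac‖ * ‖εc s‖) :=
              mul_le_mul_of_nonneg_left (Matrix.linfty_opNorm_mulVec _ _) (norm_nonneg _)
          _ = ‖W⁻¹‖ * (‖A‖ * ‖ε s‖) := by rw [hAcnorm, hεnorm]
          _ ≤ ‖W⁻¹‖ * (‖A‖ * (Real.sqrt n * εbar)) := by
              have hb := hεbd s hsIco
              exact mul_le_mul_of_nonneg_left
                (mul_le_mul_of_nonneg_left hb (norm_nonneg A)) (norm_nonneg _)
          _ = C0 := by rw [hC0def]; ring
        have hnm : ‖g s‖ = Real.exp (β * r * s) * (β * ‖(W⁻¹).mulVec (Ac.mulVec (εc s)) i‖) := by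
          rw [hgdef]
          simp only [norm_mul, hexpnorm s]
          rw [norm_neg]
          simp [abs_of_pos hβ, mul_assoc]
        rw [hnm]
        exact mul_le_mul_of_nonneg_left
          (mul_le_mul_of_nonneg_left hx hβ.le) (Real.exp_pos _).le
      have hintbd : ‖ψ τ - ψ τl‖
          ≤ (Real.exp (β * r * τ) - Real.exp (β * r * τl)) / (β * r) * (β * C0) := by
        rw [← hFTC]
        have h1 : ‖∫ s in τl..τ, g s‖ ≤ ∫ s in τl..τ, Real.exp (β * r * s) * (β * C0) := by
          refine le_trans (intervalIntegral.norm_integral_le_integral_norm hτl) ?_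
          apply intervalIntegral.integral_mono_on hτl
          · exact ((hgcont.mono hsubIcc).norm).intervalIntegrable
          · exact ((Real.continuous_exp.comp (continuous_const.mul continuous_id)).mul
              continuous_const).intervalIntegrable _ _
          · exact hgbd
        rwa [intervalIntegral.integral_mul_const, myIntegralExpMul (β * r) τl τ (by positivity)]
          at h1
      set u' := Real.exp (β * r * τl) with hu'
      set v' := Real.exp (β * r * τ) with hv'
      set w' := Real.exp (-(β * r * τ)) with hw'
      have hw'0 : 0 < w' := Real.exp_pos _
      have hu'0 : 0 < u' := Real.exp_pos _
      have hwv : w' * v' = 1 := by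
        rw [hw', hv', ← Real.exp_add]
        simp
      have hψτl : ‖ψ τl‖ ≤ u' * K := by
        have : ‖ψ τl‖ = u' * ‖η τl i‖ := by
          rw [hψdef]
          simp only [norm_mul, hexpnorm τl]
          rfl
        rw [this]
        exact mul_le_mul_of_nonneg_left (hηl i) hu'0.le
      have hψτ : ‖ψ τ‖ ≤ u' * K + (v' - u') / (β * r) * (β * C0) := by
        have := norm_sub_norm_le (ψ τ) (ψ τl)
        linarith
      have hητ : ‖η τ i‖ = w' * ‖ψ τ‖ := by
        have heq : η τ i = Complex.exp (-((β:ℂ) * ev i * τ)) * ψ τ := by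
          rw [hψdef, ← mul_assoc, ← Complex.exp_add, neg_add_cancel, Complex.exp_zero, one_mul]
        rw [heq, norm_mul]
        congr 1
        rw [Complex.norm_exp, hw']
        congr 1
        simp [Complex.mul_re, hrdef]
      have hface : ‖η τ i‖ ≤ w' * u' * K + (1 - w' * u') * (C0 / r) := by
        rw [hητ]
        calc w' * ‖ψ τ‖ ≤ w' * (u' * K + (v' - u') / (β * r) * (β * C0)) :=
            mul_le_mul_of_nonneg_left hψτ hw'0.le
        _ = w' * u' * K + (w' * v' - w' * u') * (C0 / r) := by
            field_simp
        _ = w' * u' * K + (1 - w' * u') * (C0 / r) := by rw [hwv]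
      have hwu : w' * u' = Real.exp (-(β * r * t)) := by
        rw [hw', hu', ← Real.exp_add]
        congr 1
        rw [htdef]
        ring
      have hcomp1 : Real.exp (-(β * r * t)) ≤ E := by
        rw [hEdef]
        apply Real.exp_le_exp.2
        have hh : β * Λ1re * t ≤ β * r * t :=
          mul_le_mul_of_nonneg_right (mul_le_mul_of_nonneg_left hr hβ.le) ht0
        exact neg_le_neg hh
      have hcomp2 : (1 - Real.exp (-(β * r * t))) * (C0 / r) ≤ (1 - E) * (C0 / Λ1re) := by
        have hmono := myExpDivMono hΛ1 hr (mul_nonneg hβ.le ht0)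
        have e1 : -(r * (β * t)) = -(β * r * t) := by ring
        have e2 : -(Λ1re * (β * t)) = -(β * Λ1re * t) := by ring
        rw [e1, e2] at hmono
        calc (1 - Real.exp (-(β * r * t))) * (C0 / r)
            = ((1 - Real.exp (-(β * r * t))) / r) * C0 := by ring
        _ ≤ ((1 - E) / Λ1re) * C0 := by
            apply mul_le_mul_of_nonneg_right _ hC00
            rw [hEdef]
            exact hmono
        _ = (1 - E) * (C0 / Λ1re) := by ring
      rw [hwu] at hface
      have t1 : Real.exp (-(β * r * t)) * K ≤ E * K := mul_le_mul_of_nonneg_right hcomp1 hK0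
      rw [hBdef]
      linarith
  have hζWτ : ζc τ = W.mulVec (η τ) := by
    show ζc τ = W.mulVec ((W⁻¹).mulVec (ζc τ))
    rw [Matrix.mulVec_mulVec, hWW, Matrix.one_mulVec]
  have h1 : ‖ζ τ‖ = ‖ζc τ‖ := (hnorm (ζ τ)).symm
  have h2 : ‖η τ‖ ≤ B := (pi_norm_le_iff_of_nonneg hB0).2 key
  have h3 : ‖ζ τ‖ ≤ ‖W‖ * B := by
    rw [h1, hζWτ]
    exact le_trans (Matrix.linfty_opNorm_mulVec _ _) (mul_le_mul_of_nonneg_left h2 (norm_nonneg _))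
  refine le_trans h3 (le_of_eq ?_)
  rw [hBdef, hC0def, hKdef]
  ring
end
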